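/- arXiv:2302.08311 — 2 statements merged into one kernel-verified Lean document; each statement's English description precedes it below -/
import Mathlib

section
/- For every α ∈ (-1,0) and every r ∈ [1/2,1), ∫₀^{2π} |1 - re^{it}|^{-(α+1)} dt ≤ 3^{(α+1)/2} · 2^{1-α} · Γ(-α)Γ(1/2)/Γ(1/2 - α). -/
open MeasureTheory Real Complex Filter Set
open scoped ENNReal Topology NNReal

noncomputable section

/-- The open unit disk in `ℂ`. -/
def unitDisk : Set ℂ := Metric.ball 0 1

/-- The constant `C_α = Γ(1+α/2)² / Γ(1+α)`. -/
def Cconst (α : ℝ) : ℝ := Real.Gamma (1 + α / 2) ^ 2 / Real.Gamma (1 + α)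

/-- The Poisson type kernel `K_α(z) = C_α (1-|z|²)^{α+1} / |1-z|^{α+2}`. -/
def Kker (α : ℝ) (z : ℂ) : ℝ :=
  Cconst α * (1 - ‖z‖ ^ 2) ^ (α + 1) / ‖1 - z‖ ^ (α + 2)

/-- The Poisson type integral `K_α[F](z) = (1/2π) ∫₀^{2π} K_α(z e^{-it}) F(t) dt`. -/
def poissonInt (α : ℝ) (F : ℝ → ℂ) (z : ℂ) : ℂ :=
  (1 / (2 * π)) * ∫ t in (0:ℝ)..(2 * π),
    ((Kker α (z * Complex.exp (-(t : ℂ) * Complex.I)) : ℝ) : ℂ) * F t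

/-- `polar r θ = r e^{iθ}`. -/
def polar (r θ : ℝ) : ℂ := (r : ℂ) * Complex.exp ((θ : ℂ) * Complex.I)

/-- The Wirtinger derivative `∂_z f = (f_x - i f_y)/2`. -/
def pderivZ (f : ℂ → ℂ) (z : ℂ) : ℂ :=
  (fderiv ℝ f z 1 - Complex.I * fderiv ℝ f z Complex.I) / 2

/-- The Wirtinger derivative `∂_{z̄} f = (f_x + i f_y)/2`. -/
def pderivZbar (f : ℂ → ℂ) (z : ℂ) : ℂ :=
  (fderiv ℝ f z 1 + Complex.I * fderiv ℝ f z Complex.I) / 2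

/-- The radial derivative `∂_r f(re^{iθ})`, as a function of the polar coordinates. -/
def radialDeriv (f : ℂ → ℂ) (r θ : ℝ) : ℂ :=
  deriv (fun s : ℝ => f (polar s θ)) r

/-- The radial derivative `∂_r f(z)`, as a function of `z`. -/
def radialDerivFun (f : ℂ → ℂ) (z : ℂ) : ℂ :=
  radialDeriv f ‖z‖ (Complex.arg z)

/-- The angular derivative `∂_θ f(re^{iθ})`, as a function of the polar coordinates. -/
def angularDeriv (f : ℂ → ℂ) (r θ : ℝ) : ℂ :=
  deriv (fun φ : ℝ => f (polar r φ)) θ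

/-- The integral mean `M_p(h) = ((1/2π)∫₀^{2π} |h(θ)|^p dθ)^{1/p}` over the circle,
with the sup for `p = ∞`. -/
def circMean (p : ℝ≥0∞) (h : ℝ → ℂ) : ℝ≥0∞ :=
  if p = ∞ then ⨆ θ : ℝ, (‖h θ‖₊ : ℝ≥0∞)
  else ((∫⁻ θ in Set.Ioc (0:ℝ) (2 * π), (‖h θ‖₊ : ℝ≥0∞) ^ p.toReal) /
      ENNReal.ofReal (2 * π)) ^ (1 / p.toReal)

/-- The Hardy type norm `‖g‖_{H^p_G(D)} = sup_{0 ≤ r < 1} M_p(r, g)` of a function `g`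
given in polar coordinates `(r, θ)`. -/
def hardyNorm (p : ℝ≥0∞) (g : ℝ → ℝ → ℂ) : ℝ≥0∞ :=
  ⨆ r ∈ Set.Ico (0:ℝ) 1, circMean p (g r)

/-- The Bergman type norm `‖g‖_{B^p_G(D)} = (∫_D |g|^p dσ)^{1/p}` with `dσ` the normalized
area measure on the unit disk; essential sup for `p = ∞`. -/
def bergmanNorm (p : ℝ≥0∞) (g : ℂ → ℂ) : ℝ≥0∞ :=
  if p = ∞ then essSup (fun z => (‖g z‖₊ : ℝ≥0∞)) (volume.restrict unitDisk)
  else ((∫⁻ z in unitDisk, (‖g z‖₊ : ℝ≥0∞) ^ p.toReal) / ENNReal.ofReal π) ^ (1 / p.toReal)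

/-- The `L^p` norm of a (`2π`-periodic) function on the circle. -/
def circleLp (p : ℝ≥0∞) (F : ℝ → ℂ) : ℝ≥0∞ :=
  if p = ∞ then essSup (fun θ => (‖F θ‖₊ : ℝ≥0∞)) volume
  else ((∫⁻ θ in Set.Ioc (0:ℝ) (2 * π), (‖F θ‖₊ : ℝ≥0∞) ^ p.toReal) /
      ENNReal.ofReal (2 * π)) ^ (1 / p.toReal)

/-- `F` is `2π`-periodic and absolutely continuous on compact intervals with a.e. derivative
`F'`; this is encoded, equivalently, by the fundamental theorem of calculus: `F'` is locally
integrable and `F` is the indefinite integral of `F'`. -/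
def PeriodicAC (F F' : ℝ → ℂ) : Prop :=
  Function.Periodic F (2 * π) ∧
  (∀ a b : ℝ, IntervalIntegrable F' volume a b) ∧
  (∀ θ : ℝ, F θ = F 0 + ∫ t in (0:ℝ)..θ, F' t)

/-- `F` belongs to `L^p` of the circle. -/
def MemLpT (p : ℝ≥0∞) (F : ℝ → ℂ) : Prop :=
  AEStronglyMeasurable F volume ∧ circleLp p F < ∞

/-- `‖D_f(z)‖ = |∂_z f(z)| + |∂_{z̄} f(z)|`. -/
def Dnorm (f : ℂ → ℂ) (z : ℂ) : ℝ :=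
  ‖pderivZ f z‖ + ‖pderivZbar f z‖

/-- The Jacobian `J_f(z) = |∂_z f(z)|² - |∂_{z̄} f(z)|²`. -/
def jacobian (f : ℂ → ℂ) (z : ℂ) : ℝ :=
  ‖pderivZ f z‖ ^ 2 - ‖pderivZbar f z‖ ^ 2

/-- `f` is a (sense-preserving) `(K,K')`-elliptic mapping of the unit disk. -/
def IsElliptic (K K' : ℝ) (f : ℂ → ℂ) : Prop :=
  ContinuousOn f unitDisk ∧
  (∀ᵐ z ∂(volume.restrict unitDisk), 0 < jacobian f z) ∧
  (∀ᵐ z ∂(volume.restrict unitDisk), Dnorm f z ^ 2 ≤ K * jacobian f z + K')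


namespace Stmt8Aux

/-- pointwise bound `sin v ^ c ≤ π⁻¹ ^ c * v ^ c` when `π⁻¹ v ≤ sin v`. -/
private lemma key_bound {c : ℝ} (hc0 : c < 0) {v : ℝ} (hv : 0 < v)
    (hle : π⁻¹ * v ≤ Real.sin v) : Real.sin v ^ c ≤ π⁻¹ ^ c * v ^ c := by
  have hπ := Real.pi_pos
  have h1 : (π⁻¹ * v) ^ c = π⁻¹ ^ c * v ^ c :=
    Real.mul_rpow (by positivity) hv.le
  rw [← h1]
  exact Real.rpow_le_rpow_of_nonpos (mul_pos (inv_pos.2 hπ) hv) hle hc0.le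

private lemma sin_low {v : ℝ} (hv : 0 ≤ v) (hv2 : v ≤ π / 2) : π⁻¹ * v ≤ Real.sin v := by
  have hπ := Real.pi_pos
  have hπi : 0 < π⁻¹ := inv_pos.2 hπ
  have := Real.mul_le_sin hv hv2
  have h2 : π⁻¹ * v ≤ 2 / π * v := by
    apply mul_le_mul_of_nonneg_right _ hv
    rw [div_eq_mul_inv]; linarith
  linarith

/-- integrability of `sin u ^ c` on `(0, π)` for `-1 < c < 0`. -/
lemma intA {c : ℝ} (hc : -1 < c) (hc0 : c < 0) :
    IntegrableOn (fun u : ℝ => Real.sin u ^ c) (Ioo 0 π) := by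
  have hπ := Real.pi_pos
  have hmeas : AEStronglyMeasurable (fun u : ℝ => Real.sin u ^ c)
      (volume.restrict (Ioo 0 π)) :=
    ((Real.measurable_sin.pow measurable_const).aestronglyMeasurable)
  have hint1 : IntegrableOn (fun u : ℝ => u ^ c) (Ioo 0 π) := by
    have := (intervalIntegral.intervalIntegrable_rpow' (a := 0) (b := π) hc)
    rw [intervalIntegrable_iff, uIoc_of_le hπ.le] at this
    exact this.mono_set Ioo_subset_Ioc_self
  have hint2 : IntegrableOn (fun u : ℝ => (π - u) ^ c) (Ioo 0 π) := by
    have := (intervalIntegral.intervalIntegrable_rpow' (a := 0) (b := π) hc).comp_sub_left π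
    rw [intervalIntegrable_iff] at this
    have hs : Ioo (0:ℝ) π ⊆ Set.uIoc (π - 0) (π - π) := by
      rw [sub_self, sub_zero, uIoc_comm, uIoc_of_le hπ.le]
      exact Ioo_subset_Ioc_self
    exact this.mono_set hs
  refine Integrable.mono' (((hint1.add hint2).const_mul ((π:ℝ)⁻¹ ^ c))) hmeas ?_
  filter_upwards [ae_restrict_mem measurableSet_Ioo] with u hu
  obtain ⟨hu1, hu2⟩ := hu
  have hsin : 0 < Real.sin u := Real.sin_pos_of_pos_of_lt_pi hu1 hu2
  rw [Real.norm_of_nonneg (Real.rpow_nonneg hsin.le c)]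
  rcases le_or_gt u (π/2) with h | h
  · have := key_bound hc0 hu1 (sin_low hu1.le h)
    have hnn : 0 ≤ π⁻¹ ^ c * (π - u) ^ c :=
      mul_nonneg (Real.rpow_nonneg (by positivity) c) (Real.rpow_nonneg (by linarith) c)
    calc Real.sin u ^ c ≤ π⁻¹ ^ c * u ^ c := this
      _ ≤ π⁻¹ ^ c * u ^ c + π⁻¹ ^ c * (π - u) ^ c := by linarith
      _ = π⁻¹ ^ c * (u ^ c + (π - u) ^ c) := by ring
  · have h3 : Real.sin u = Real.sin (π - u) := (Real.sin_pi_sub u).symm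
    have := key_bound hc0 (v := π - u) (by linarith) (sin_low (by linarith) (by linarith))
    rw [← h3] at this
    have hnn : 0 ≤ π⁻¹ ^ c * u ^ c :=
      mul_nonneg (Real.rpow_nonneg (by positivity) c) (Real.rpow_nonneg hu1.le c)
    calc Real.sin u ^ c ≤ π⁻¹ ^ c * (π - u) ^ c := this
      _ ≤ π⁻¹ ^ c * u ^ c + π⁻¹ ^ c * (π - u) ^ c := by linarith
      _ = π⁻¹ ^ c * (u ^ c + (π - u) ^ c) := by ring

/-- integrability of `sin (t/2) ^ c` on `(0, 2π)` for `-1 < c < 0`. -/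
lemma intA2 {c : ℝ} (hc : -1 < c) (hc0 : c < 0) :
    IntegrableOn (fun t : ℝ => Real.sin (t/2) ^ c) (Ioo 0 (2*π)) := by
  have hπ := Real.pi_pos
  have hmeas : AEStronglyMeasurable (fun t : ℝ => Real.sin (t/2) ^ c)
      (volume.restrict (Ioo 0 (2*π))) :=
    (((Real.measurable_sin.comp (measurable_id.div_const 2)).pow
      measurable_const).aestronglyMeasurable)
  have hint1 : IntegrableOn (fun t : ℝ => t ^ c) (Ioo 0 (2*π)) := by
    have := (intervalIntegral.intervalIntegrable_rpow' (a := 0) (b := 2*π) hc)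
    rw [intervalIntegrable_iff, uIoc_of_le (by linarith)] at this
    exact this.mono_set Ioo_subset_Ioc_self
  have hint2 : IntegrableOn (fun t : ℝ => (2*π - t) ^ c) (Ioo 0 (2*π)) := by
    have := (intervalIntegral.intervalIntegrable_rpow' (a := 0) (b := 2*π) hc).comp_sub_left (2*π)
    rw [intervalIntegrable_iff] at this
    have hs : Ioo (0:ℝ) (2*π) ⊆ Set.uIoc (2*π - 0) (2*π - 2*π) := by
      rw [sub_self, sub_zero, uIoc_comm, uIoc_of_le (by linarith)]
      exact Ioo_subset_Ioc_self
    exact this.mono_set hs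
  refine Integrable.mono' (((hint1.add hint2).const_mul ((2*(π:ℝ))⁻¹ ^ c))) hmeas ?_
  filter_upwards [ae_restrict_mem measurableSet_Ioo] with t ht
  obtain ⟨ht1, ht2⟩ := ht
  have hsin : 0 < Real.sin (t/2) :=
    Real.sin_pos_of_pos_of_lt_pi (by linarith) (by linarith)
  rw [Real.norm_of_nonneg (Real.rpow_nonneg hsin.le c)]
  have key2 : ∀ w : ℝ, 0 < w → π⁻¹ * (w/2) ≤ Real.sin (t/2) →
      Real.sin (t/2) ^ c ≤ (2*π)⁻¹ ^ c * w ^ c := by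
    intro w hw hle
    have h0 : π⁻¹ * (w/2) = (2*π)⁻¹ * w := by
      rw [mul_inv]; ring
    rw [h0] at hle
    have h1 : ((2*π)⁻¹ * w) ^ c = (2*π)⁻¹ ^ c * w ^ c := Real.mul_rpow (by positivity) hw.le
    have h2 := Real.rpow_le_rpow_of_nonpos
      (mul_pos (inv_pos.2 (by linarith : (0:ℝ) < 2*π)) hw) hle hc0.le
    rw [h1] at h2
    exact h2
  rcases le_or_gt t π with h | h
  · have hle : π⁻¹ * (t/2) ≤ Real.sin (t/2) := sin_low (by linarith) (by linarith)
    have := key2 t ht1 hle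
    have hnn : 0 ≤ (2*π)⁻¹ ^ c * (2*π - t) ^ c :=
      mul_nonneg (Real.rpow_nonneg (by positivity) c) (Real.rpow_nonneg (by linarith) c)
    calc Real.sin (t/2) ^ c ≤ (2*π)⁻¹ ^ c * t ^ c := this
      _ ≤ (2*π)⁻¹ ^ c * t ^ c + (2*π)⁻¹ ^ c * (2*π - t) ^ c := by linarith
      _ = (2*π)⁻¹ ^ c * (t ^ c + (2*π - t) ^ c) := by ring
  · have h3 : Real.sin (t/2) = Real.sin ((2*π - t)/2) := by
      rw [show (2*π - t)/2 = π - t/2 by ring, Real.sin_pi_sub]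
    have hle : π⁻¹ * ((2*π - t)/2) ≤ Real.sin (t/2) := by
      rw [h3]
      exact sin_low (by linarith) (by linarith)
    have := key2 (2*π - t) (by linarith) hle
    have hnn : 0 ≤ (2*π)⁻¹ ^ c * t ^ c :=
      mul_nonneg (Real.rpow_nonneg (by positivity) c) (Real.rpow_nonneg ht1.le c)
    calc Real.sin (t/2) ^ c ≤ (2*π)⁻¹ ^ c * (2*π - t) ^ c := this
      _ ≤ (2*π)⁻¹ ^ c * t ^ c + (2*π)⁻¹ ^ c * (2*π - t) ^ c := by linarith
      _ = (2*π)⁻¹ ^ c * (t ^ c + (2*π - t) ^ c) := by ring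

lemma beta_eqon {α : ℝ} :
    EqOn (fun x : ℝ => (x:ℂ) ^ ((-α:ℂ) - 1) * (1 - (x:ℂ)) ^ ((1/2:ℂ) - 1))
      (fun x : ℝ => ((x ^ (-α-1) * (1-x) ^ (-(1/2):ℝ) : ℝ) : ℂ)) (Ioc 0 1) := by
  intro x hx
  simp only
  rw [Complex.ofReal_mul, Complex.ofReal_cpow hx.1.le,
    Complex.ofReal_cpow (by linarith [hx.2] : (0:ℝ) ≤ 1 - x)]
  push_cast
  norm_num

lemma beta_int {α : ℝ} (hα1 : -1 < α) (hα2 : α < 0) :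
    IntegrableOn (fun x : ℝ => x ^ (-α-1) * (1-x) ^ (-(1/2):ℝ)) (Ioo 0 1) := by
  have hu : (0:ℝ) < -α := by linarith
  have hconv := Complex.betaIntegral_convergent (u := (-α:ℂ)) (v := (1/2:ℂ))
    (by simpa using hu) (by norm_num)
  rw [intervalIntegrable_iff, uIoc_of_le (by norm_num : (0:ℝ) ≤ 1)] at hconv
  have hconv2 : IntegrableOn
      (fun x : ℝ => ((x ^ (-α-1) * (1-x) ^ (-(1/2):ℝ) : ℝ) : ℂ)) (Ioc 0 1) :=
    hconv.congr_fun beta_eqon measurableSet_Ioc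
  have h3 := hconv2.re
  have h4 : IntegrableOn (fun x : ℝ => x ^ (-α-1) * (1-x) ^ (-(1/2):ℝ)) (Ioc 0 1) :=
    MeasureTheory.IntegrableOn.congr_fun h3 (fun x _ => by simp) measurableSet_Ioc
  exact h4.mono_set Ioo_subset_Ioc_self

lemma beta_val {α : ℝ} (hα1 : -1 < α) (hα2 : α < 0) :
    ∫ x in Ioo (0:ℝ) 1, x ^ (-α-1) * (1-x) ^ (-(1/2):ℝ)
      = Real.Gamma (-α) * Real.Gamma (1/2) / Real.Gamma (1/2 - α) := by
  have hu : (0:ℝ) < -α := by linarith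
  have h1 : Complex.betaIntegral (-α:ℂ) (1/2:ℂ)
      = ((∫ x in Ioc (0:ℝ) 1, x ^ (-α-1) * (1-x) ^ (-(1/2):ℝ) : ℝ) : ℂ) := by
    rw [Complex.betaIntegral, intervalIntegral.integral_of_le (by norm_num : (0:ℝ) ≤ 1),
      setIntegral_congr_fun measurableSet_Ioc beta_eqon]
    exact integral_ofReal
  have h2 := Complex.Gamma_mul_Gamma_eq_betaIntegral (s := (-α:ℂ)) (t := (1/2:ℂ))
    (by simpa using hu) (by norm_num)
  rw [h1] at h2
  rw [show (-α:ℂ) = ((-α:ℝ):ℂ) by push_cast; ring,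
    show (1/2:ℂ) = ((1/2:ℝ):ℂ) by norm_num,
    show (((-α:ℝ)):ℂ) + ((1/2:ℝ):ℂ) = ((1/2 - α : ℝ):ℂ) by push_cast; ring] at h2
  rw [Complex.Gamma_ofReal, Complex.Gamma_ofReal, Complex.Gamma_ofReal,
    ← Complex.ofReal_mul, ← Complex.ofReal_mul] at h2
  have h4 := Complex.ofReal_inj.mp h2
  have h5 : Real.Gamma (1/2 - α) ≠ 0 :=
    (Real.Gamma_pos_of_pos (by linarith)).ne'
  rw [MeasureTheory.integral_Ioc_eq_integral_Ioo] at h4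
  rw [eq_div_iff h5, h4, mul_comm]

lemma subst_sin {c : ℝ} :
    ∫ u in Ioo (0:ℝ) (π/2), Real.sin u ^ c
      = ∫ x in Ioo (0:ℝ) 1, x ^ c * (1 - x^2) ^ (-(1/2):ℝ) := by
  have hπ := Real.pi_pos
  have himg : Real.sin '' Ioo 0 (π/2) = Ioo 0 1 := by
    ext y
    constructor
    · rintro ⟨x, hx, rfl⟩
      refine ⟨Real.sin_pos_of_pos_of_lt_pi hx.1 (by linarith [hx.2]), ?_⟩
      calc Real.sin x < Real.sin (π/2) :=
            Real.strictMonoOn_sin ⟨by linarith [hx.1], hx.2.le⟩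
              ⟨by linarith, le_refl _⟩ hx.2
        _ = 1 := Real.sin_pi_div_two
    · intro hy
      rw [Set.mem_image]
      refine ⟨Real.arcsin y, ?_, Real.sin_arcsin (by linarith [hy.1]) hy.2.le⟩
      exact ⟨Real.arcsin_pos.2 hy.1, Real.arcsin_lt_pi_div_two.2 hy.2⟩
  have hderiv : ∀ x ∈ Ioo (0:ℝ) (π/2),
      HasDerivWithinAt Real.sin (Real.cos x) (Ioo 0 (π/2)) x :=
    fun x _ => (Real.hasDerivAt_sin x).hasDerivWithinAt
  have hsub : Ioo (0:ℝ) (π/2) ⊆ Icc (-(π/2)) (π/2) := fun x hx =>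
    ⟨by linarith [hx.1], hx.2.le⟩
  have hinj : InjOn Real.sin (Ioo (0:ℝ) (π/2)) := Real.injOn_sin.mono hsub
  symm
  rw [← himg, integral_image_eq_integral_abs_deriv_smul measurableSet_Ioo hderiv hinj]
  refine setIntegral_congr_fun measurableSet_Ioo (fun u hu => ?_)
  have hcos : 0 < Real.cos u := Real.cos_pos_of_mem_Ioo ⟨by linarith [hu.1], hu.2⟩
  have hsin : 0 < Real.sin u := Real.sin_pos_of_pos_of_lt_pi hu.1 (by linarith [hu.2])
  have h1 : 1 - Real.sin u ^ 2 = Real.cos u ^ 2 := (Real.cos_sq' u).symm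
  have h2 : (Real.cos u ^ 2 : ℝ) ^ (-(1/2):ℝ) = (Real.cos u)⁻¹ := by
    rw [← Real.rpow_natCast (Real.cos u) 2, ← Real.rpow_mul hcos.le]
    norm_num [Real.rpow_neg_one]
  simp only [smul_eq_mul]
  rw [h1, h2, abs_of_pos hcos]
  field_simp

lemma abs_bound {r : ℝ} (hr : 1/2 ≤ r) (hr1 : r < 1) (t : ℝ) :
    2 / Real.sqrt 3 * Real.sin (t/2)
      ≤ ‖1 - (r : ℂ) * Complex.exp ((t : ℂ) * Complex.I)‖ := by
  have h3 : (0:ℝ) < Real.sqrt 3 := Real.sqrt_pos.2 (by norm_num)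
  have habs : ‖1 - (r : ℂ) * Complex.exp ((t : ℂ) * Complex.I)‖ ^ 2
      = 1 - 2*r*Real.cos t + r^2 := by
    rw [Complex.sq_norm, Complex.normSq_apply]
    simp only [Complex.sub_re, Complex.sub_im, Complex.one_re, Complex.one_im,
      Complex.mul_re, Complex.mul_im, Complex.ofReal_re, Complex.ofReal_im,
      Complex.exp_ofReal_mul_I_re, Complex.exp_ofReal_mul_I_im]
    nlinarith [Real.sin_sq_add_cos_sq t]
  have hsinsq : Real.sin (t/2) ^ 2 = 1/2 - Real.cos t / 2 := by
    have := Real.sin_sq_eq_half_sub (t/2)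
    rwa [show 2 * (t/2) = t by ring] at this
  rcases le_or_gt (Real.sin (t/2)) 0 with h | h
  · exact (mul_nonpos_of_nonneg_of_nonpos (by positivity) h).trans
      (norm_nonneg _)
  · have hsq : (2 / Real.sqrt 3 * Real.sin (t/2)) ^ 2
        ≤ ‖1 - (r : ℂ) * Complex.exp ((t : ℂ) * Complex.I)‖ ^ 2 := by
      rw [habs, mul_pow, div_pow, Real.sq_sqrt (by norm_num : (0:ℝ) ≤ 3), hsinsq]
      have hc1 := Real.cos_le_one t
      nlinarith [sq_nonneg (1 - r),
        mul_nonneg (by linarith : (0:ℝ) ≤ 1 - Real.cos t)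
          (by linarith : (0:ℝ) ≤ 2*r - 2/3)]
    have h0 : 0 ≤ 2 / Real.sqrt 3 * Real.sin (t/2) := by positivity
    have := Real.sqrt_le_sqrt hsq
    rwa [Real.sqrt_sq h0, Real.sqrt_sq (norm_nonneg _)] at this

end Stmt8Aux

/-- For `α ∈ (-1,0)` and `r ∈ [1/2,1)`,
`∫₀^{2π} |1-re^{it}|^{-(α+1)} dt ≤ 3^{(α+1)/2} 2^{1-α} Γ(-α)Γ(1/2)/Γ(1/2-α)`. -/
theorem stmt8 (α : ℝ) (hα1 : -1 < α) (hα2 : α < 0) (r : ℝ) (hr : 1/2 ≤ r) (hr1 : r < 1) :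
    (∫ t in (0:ℝ)..(2 * π),
        ‖1 - (r : ℂ) * Complex.exp ((t : ℂ) * Complex.I)‖ ^ (-(α + 1))) ≤
      (3:ℝ) ^ ((α + 1) / 2) * (2:ℝ) ^ (1 - α) *
        (Real.Gamma (-α) * Real.Gamma (1/2) / Real.Gamma (1/2 - α)) := by
  have hπ := Real.pi_pos
  set c : ℝ := -(α+1) with hcdef
  have hc : -1 < c := by rw [hcdef]; linarith
  have hc0 : c < 0 := by rw [hcdef]; linarith
  have hce : c = -α - 1 := by rw [hcdef]; ring
  have h2π : (0:ℝ) ≤ 2*π := by linarith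
  have h3 : (0:ℝ) < Real.sqrt 3 := Real.sqrt_pos.2 (by norm_num)
  set G : ℝ := Real.Gamma (-α) * Real.Gamma (1/2) / Real.Gamma (1/2 - α) with hGdef
  set C : ℝ := (3:ℝ) ^ ((α+1)/2) * (2:ℝ) ^ c with hCdef
  have hCpos : 0 < C := by
    rw [hCdef]
    exact mul_pos (Real.rpow_pos_of_pos (by norm_num) _) (Real.rpow_pos_of_pos (by norm_num) _)
  -- nonvanishing
  have hzpos : ∀ t : ℝ, 0 < ‖1 - (r:ℂ) * Complex.exp ((t:ℂ)*Complex.I)‖ := by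
    intro t
    have h1 : ‖(1:ℂ)‖ - ‖(r:ℂ) * Complex.exp ((t:ℂ)*Complex.I)‖
        ≤ ‖1 - (r:ℂ)*Complex.exp ((t:ℂ)*Complex.I)‖ := norm_sub_norm_le _ _
    have h2 : ‖(r:ℂ) * Complex.exp ((t:ℂ)*Complex.I)‖ = r := by
      rw [norm_mul, Complex.norm_exp_ofReal_mul_I,
        Complex.norm_real, Real.norm_eq_abs, _root_.abs_of_nonneg (by linarith : (0:ℝ) ≤ r), mul_one]
    rw [h2, norm_one] at h1
    linarith
  have hf_cont : Continuous
      (fun t : ℝ => ‖1 - (r:ℂ) * Complex.exp ((t:ℂ)*Complex.I)‖ ^ c) := by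
    apply Continuous.rpow_const
    · exact continuous_norm.comp (by continuity)
    · exact fun t => Or.inl (hzpos t).ne'
  -- constant computation
  have hC3 : (2/Real.sqrt 3 : ℝ) ^ c = C := by
    rw [Real.div_rpow (by norm_num) h3.le, Real.sqrt_eq_rpow,
      ← Real.rpow_mul (by norm_num : (0:ℝ) ≤ 3), div_eq_mul_inv,
      ← Real.rpow_neg (by norm_num : (0:ℝ) ≤ 3),
      show -(1/2*c) = (α+1)/2 by rw [hcdef]; ring, hCdef]
    ring
  -- pointwise bound
  have hpt : ∀ t ∈ Ioo (0:ℝ) (2*π),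
      ‖1 - (r:ℂ) * Complex.exp ((t:ℂ)*Complex.I)‖ ^ c
        ≤ C * Real.sin (t/2) ^ c := by
    intro t ht
    have hsin : 0 < Real.sin (t/2) :=
      Real.sin_pos_of_pos_of_lt_pi (by linarith [ht.1]) (by linarith [ht.2])
    have hb := Stmt8Aux.abs_bound hr hr1 t
    have h1 : ‖1 - (r:ℂ) * Complex.exp ((t:ℂ)*Complex.I)‖ ^ c
        ≤ (2/Real.sqrt 3 * Real.sin (t/2)) ^ c :=
      Real.rpow_le_rpow_of_nonpos (by positivity) hb hc0.le
    rwa [Real.mul_rpow (by positivity) hsin.le, hC3] at h1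
  -- integrabilities
  have hf_int : IntegrableOn
      (fun t : ℝ => ‖1 - (r:ℂ) * Complex.exp ((t:ℂ)*Complex.I)‖ ^ c)
      (Ioo 0 (2*π)) :=
    (hf_cont.integrableOn_Icc).mono_set Ioo_subset_Icc_self
  have hg_int : IntegrableOn (fun t : ℝ => C * Real.sin (t/2) ^ c) (Ioo 0 (2*π)) :=
    (Stmt8Aux.intA2 hc hc0).const_mul _
  -- step 1 : monotonicity
  rw [intervalIntegral.integral_of_le h2π, MeasureTheory.integral_Ioc_eq_integral_Ioo]
  have step1 := setIntegral_mono_on hf_int hg_int measurableSet_Ioo hpt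
  -- value chain
  have e1 : ∫ t in Ioo (0:ℝ) (2*π), Real.sin (t/2) ^ c
      = ∫ t in (0:ℝ)..(2*π), Real.sin (t/2) ^ c := by
    rw [intervalIntegral.integral_of_le h2π, MeasureTheory.integral_Ioc_eq_integral_Ioo]
  have e2 : ∫ t in (0:ℝ)..(2*π), Real.sin (t/2) ^ c
      = 2 * ∫ u in (0:ℝ)..π, Real.sin u ^ c := by
    have h := intervalIntegral.integral_comp_div (a := (0:ℝ)) (b := 2*π)
      (c := 2) (f := fun u => Real.sin u ^ c) (by norm_num)
    simp only [smul_eq_mul] at h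
    rw [h, zero_div, show (2*π)/2 = π by ring]
  have hIIa : IntervalIntegrable (fun u : ℝ => Real.sin u ^ c) volume 0 (π/2) := by
    rw [intervalIntegrable_iff, uIoc_of_le (by linarith)]
    exact (Stmt8Aux.intA hc hc0).mono_set
      (fun x hx => ⟨hx.1, by linarith [hx.2]⟩)
  have hIIb : IntervalIntegrable (fun u : ℝ => Real.sin u ^ c) volume (π/2) π := by
    rw [intervalIntegrable_iff, uIoc_of_le (by linarith)]
    exact ((Stmt8Aux.intA hc hc0).mono_set
      (fun x (hx : x ∈ Ioo (π/2) π) => ⟨by linarith [hx.1], hx.2⟩)).congr_set_ae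
      Ioo_ae_eq_Ioc.symm
  have e3 : ∫ u in (0:ℝ)..π, Real.sin u ^ c
      = 2 * ∫ u in (0:ℝ)..(π/2), Real.sin u ^ c := by
    have hsplit := intervalIntegral.integral_add_adjacent_intervals hIIa hIIb
    have hrefl : ∫ u in (π/2:ℝ)..π, Real.sin u ^ c
        = ∫ u in (0:ℝ)..(π/2), Real.sin u ^ c := by
      have h := intervalIntegral.integral_comp_sub_left (a := (0:ℝ)) (b := π/2)
        (fun u : ℝ => Real.sin u ^ c) π
      simp only [Real.sin_pi_sub] at h
      rw [show π - π/2 = π/2 by ring, sub_zero] at h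
      exact h.symm
    linarith [hsplit, hrefl]
  have e4 : ∫ u in (0:ℝ)..(π/2), Real.sin u ^ c
      = ∫ u in Ioo (0:ℝ) (π/2), Real.sin u ^ c := by
    rw [intervalIntegral.integral_of_le (by linarith), MeasureTheory.integral_Ioc_eq_integral_Ioo]
  have e5 := Stmt8Aux.subst_sin (c := c)
  -- comparison with Beta
  have hBint := Stmt8Aux.beta_int hα1 hα2
  have hmeasK : AEStronglyMeasurable (fun x : ℝ => x ^ c * (1 - x^2) ^ (-(1/2):ℝ))
      (volume.restrict (Ioo 0 1)) := by
    apply Measurable.aestronglyMeasurable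
    exact (measurable_id.pow measurable_const).mul
      (((continuous_const.sub (continuous_pow 2)).measurable).pow measurable_const)
  have hptx : ∀ x ∈ Ioo (0:ℝ) 1,
      x ^ c * (1 - x^2) ^ (-(1/2):ℝ) ≤ x ^ (-α-1) * (1-x) ^ (-(1/2):ℝ) := by
    intro x hx
    rw [hce]
    apply mul_le_mul_of_nonneg_left _ (Real.rpow_nonneg hx.1.le _)
    apply Real.rpow_le_rpow_of_nonpos (by nlinarith [hx.1, hx.2])
      (by nlinarith [hx.1, hx.2]) (by norm_num)
  have hK_int : IntegrableOn (fun x : ℝ => x ^ c * (1 - x^2) ^ (-(1/2):ℝ)) (Ioo 0 1) := by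
    refine Integrable.mono' hBint hmeasK ?_
    filter_upwards [ae_restrict_mem measurableSet_Ioo] with x hx
    have hnn : 0 ≤ x ^ c * (1 - x^2) ^ (-(1/2):ℝ) :=
      mul_nonneg (Real.rpow_nonneg hx.1.le _) (Real.rpow_nonneg (by nlinarith [hx.1, hx.2]) _)
    rw [Real.norm_of_nonneg hnn]
    exact hptx x hx
  have hKB : ∫ x in Ioo (0:ℝ) 1, x ^ c * (1 - x^2) ^ (-(1/2):ℝ) ≤ G := by
    rw [hGdef, ← Stmt8Aux.beta_val hα1 hα2]
    exact setIntegral_mono_on hK_int hBint measurableSet_Ioo hptx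
  -- final arithmetic
  have hpow : (2:ℝ) ^ (1 - α) = 2 ^ c * 4 := by
    rw [show (1 - α : ℝ) = c + 2 by rw [hcdef]; ring, Real.rpow_add (by norm_num)]
    norm_num
  calc (∫ t in Ioo (0:ℝ) (2*π),
        ‖1 - (r:ℂ) * Complex.exp ((t:ℂ)*Complex.I)‖ ^ c)
      ≤ ∫ t in Ioo (0:ℝ) (2*π), C * Real.sin (t/2) ^ c := step1
    _ = C * ∫ t in Ioo (0:ℝ) (2*π), Real.sin (t/2) ^ c :=
        MeasureTheory.integral_const_mul _ _
    _ = (C * 4) * ∫ x in Ioo (0:ℝ) 1, x ^ c * (1 - x^2) ^ (-(1/2):ℝ) := by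
        rw [e1, e2, e3, e4, e5]; ring
    _ ≤ (C * 4) * G := by
        apply mul_le_mul_of_nonneg_left hKB (by positivity)
    _ = (3:ℝ) ^ ((α+1)/2) * (2:ℝ) ^ (1-α) * G := by
        rw [hpow, hCdef]; ring

end
end

section
/- Let α ∈ (-1,0), let n be a positive integer, and let f(z) = Σ_{k=0}^∞ a_{n,k} |z|^{2k} z^n on D, where a_{n,k} = ((-α/2)_k (n-α/2)_k)/((n+1)_k · k!) and (x)_k = x(x+1)⋯(x+k-1) is the rising factorial. Then for every p ∈ (0,∞], the Hardy type norms of all three partial derivatives are infinite: ‖∂_r f‖_{H^p_G(D)} = ‖∂_z f‖_{H^p_G(D)} = ‖∂_{z̄} f‖_{H^p_G(D)} = ∞. -/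
open MeasureTheory Real Complex Filter Set
open scoped ENNReal Topology NNReal

noncomputable section

/-- The rising factorial `(x)_k = x(x+1)⋯(x+k-1)`. -/
noncomputable def poch (x : ℝ) (k : ℕ) : ℝ := Polynomial.eval x (ascPochhammer ℝ k)

/-- `a_{n,k} = ((-α/2)_k (n-α/2)_k)/((n+1)_k k!)`. -/
noncomputable def coefA (α : ℝ) (n k : ℕ) : ℝ :=
  poch (-α / 2) k * poch ((n : ℝ) - α / 2) k / (poch ((n : ℝ) + 1) k * (Nat.factorial k))

/-- The mapping `f(z) = Σ_{k≥0} a_{n,k} |z|^{2k} z^n`. -/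
noncomputable def exF (α : ℝ) (n : ℕ) (z : ℂ) : ℂ :=
  ∑' k : ℕ, ((coefA α n k * ‖z‖ ^ (2 * k) : ℝ) : ℂ) * z ^ n

namespace S15

/-! ### Pochhammer and coefficient estimates -/

lemma poch_pos {x : ℝ} (hx : 0 < x) (k : ℕ) : 0 < poch x k := by
  induction k with
  | zero => simp [poch]
  | succ k ih =>
    rw [poch, ascPochhammer_succ_eval]
    exact mul_pos ih (add_pos_of_pos_of_nonneg hx (Nat.cast_nonneg k))

lemma poch_le {x y : ℝ} (hx : 0 < x) (hxy : x ≤ y) (k : ℕ) : poch x k ≤ poch y k := by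
  induction k with
  | zero => simp [poch]
  | succ k ih =>
    rw [poch, poch, ascPochhammer_succ_eval, ascPochhammer_succ_eval]
    have h1 : (0:ℝ) ≤ x + k := by positivity
    exact mul_le_mul ih (by linarith) h1 (le_of_lt (poch_pos (lt_of_lt_of_le hx hxy) k))

lemma poch_one (k : ℕ) : poch 1 k = k.factorial := by
  induction k with
  | zero => simp [poch]
  | succ k ih =>
    rw [poch, ascPochhammer_succ_eval, Nat.factorial_succ]
    rw [show Polynomial.eval 1 (ascPochhammer ℝ k) = poch 1 k from rfl, ih]
    push_cast
    ring

lemma poch_succ_left (x : ℝ) (k : ℕ) : poch x (k + 1) = x * poch (x + 1) k := by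
  rw [poch, ascPochhammer_succ_left]
  simp only [Polynomial.eval_mul, Polynomial.eval_X, Polynomial.eval_comp, Polynomial.eval_add,
    Polynomial.eval_one]
  rfl

lemma poch_succ_ge {c : ℝ} (hc : 0 < c) (k : ℕ) :
    c * (Nat.factorial k : ℝ) ≤ poch c (k + 1) := by
  induction k with
  | zero => simp [poch, ascPochhammer_one]
  | succ k ih =>
    rw [poch, ascPochhammer_succ_eval, Nat.factorial_succ]
    rw [show Polynomial.eval c (ascPochhammer ℝ (k+1)) = poch c (k+1) from rfl]
    have h2 : ((k:ℝ) + 1) ≤ c + (k + 1 : ℕ) := by push_cast; linarith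
    calc c * ((k+1 : ℕ) * k.factorial : ℕ) = (c * k.factorial) * ((k:ℝ) + 1) := by
          push_cast; ring
      _ ≤ poch c (k+1) * (c + (k + 1 : ℕ)) := by
          apply mul_le_mul ih h2 (by positivity) (le_of_lt (poch_pos hc (k+1)))

section withAlpha

variable {α : ℝ} (hα1 : -1 < α) (hα2 : α < 0) (n : ℕ)

include hα2 in
lemma coefA_pos (k : ℕ) : 0 < coefA α n k := by
  have h1 : (0:ℝ) < -α/2 := by linarith
  have h2 : (0:ℝ) < (n:ℝ) - α/2 := by
    have : (0:ℝ) ≤ n := Nat.cast_nonneg n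
    linarith
  have h3 : (0:ℝ) < (n:ℝ) + 1 := by positivity
  unfold coefA
  have p1 := poch_pos h1 k
  have p2 := poch_pos h2 k
  have p3 := poch_pos h3 k
  have p4 : (0:ℝ) < (Nat.factorial k : ℝ) := by positivity
  positivity

include hα1 hα2 in
lemma coefA_le_one (k : ℕ) : coefA α n k ≤ 1 := by
  have h1 : (0:ℝ) < -α/2 := by linarith
  have h1' : -α/2 ≤ 1 := by linarith
  have h2 : (0:ℝ) < (n:ℝ) - α/2 := by
    have : (0:ℝ) ≤ n := Nat.cast_nonneg n
    linarith
  have h2' : (n:ℝ) - α/2 ≤ (n:ℝ) + 1 := by linarith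
  unfold coefA
  rw [div_le_one (by
    have p3 := poch_pos (show (0:ℝ) < (n:ℝ)+1 by positivity) k
    have p4 : (0:ℝ) < (Nat.factorial k : ℝ) := by positivity
    positivity)]
  calc poch (-α/2) k * poch ((n:ℝ) - α/2) k
      ≤ poch 1 k * poch ((n:ℝ)+1) k := by
        apply mul_le_mul (poch_le h1 h1' k) (poch_le h2 h2' k)
          (le_of_lt (poch_pos h2 k)) (le_of_lt (poch_pos one_pos k))
    _ = poch ((n:ℝ)+1) k * (Nat.factorial k) := by rw [poch_one, mul_comm]

include hα1 hα2 in
lemma coefA_lower (hn : 0 < n) (k : ℕ) :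
    (-α/2) * n / ((n:ℝ) + 1 + k) ≤ ((k:ℝ) + 1) * coefA α n (k + 1) := by
  have h1 : (0:ℝ) < -α/2 := by linarith
  have hn0 : (0:ℝ) < (n:ℝ) := by exact_mod_cast hn
  have hQ : (0:ℝ) < poch ((n:ℝ)+1) k := poch_pos (by positivity) k
  have hfac : (0:ℝ) < (Nat.factorial k : ℝ) := by positivity
  have hD : (0:ℝ) < (n:ℝ) + 1 + k := by positivity
  have hP1 : (-α/2) * (Nat.factorial k : ℝ) ≤ poch (-α/2) (k+1) := poch_succ_ge h1 k
  have hP2 : (n:ℝ) * poch ((n:ℝ)+1) k ≤ poch ((n:ℝ) - α/2) (k+1) := by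
    rw [show (n:ℝ) * poch ((n:ℝ)+1) k = poch (n:ℝ) (k+1) from (poch_succ_left _ _).symm]
    exact poch_le hn0 (by linarith) (k+1)
  have hP3 : poch ((n:ℝ)+1) (k+1) = poch ((n:ℝ)+1) k * ((n:ℝ) + 1 + k) := by
    rw [poch, ascPochhammer_succ_eval]; rfl
  have hfs : ((Nat.factorial (k+1) : ℕ) : ℝ) = ((k:ℝ)+1) * (Nat.factorial k : ℝ) := by
    rw [Nat.factorial_succ]; push_cast; ring
  unfold coefA
  rw [hP3, hfs, mul_div_assoc', div_le_div_iff₀ hD (by positivity)]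
  calc (-α/2) * (n:ℝ) * (poch ((n:ℝ)+1) k * ((n:ℝ)+1+k) * (((k:ℝ)+1) * (Nat.factorial k)))
      = (((-α/2) * Nat.factorial k) * ((n:ℝ) * poch ((n:ℝ)+1) k)) * (((n:ℝ)+1+k) * ((k:ℝ)+1)) := by
        ring
    _ ≤ (poch (-α/2) (k+1) * poch ((n:ℝ) - α/2) (k+1)) * (((n:ℝ)+1+k) * ((k:ℝ)+1)) := by
        apply mul_le_mul_of_nonneg_right _ (by positivity)
        apply mul_le_mul hP1 hP2 (by positivity) (le_of_lt (poch_pos (by linarith) (k+1)))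
    _ = ((k:ℝ)+1) * (poch (-α/2) (k+1) * poch ((n:ℝ) - α/2) (k+1)) * ((n:ℝ)+1+k) := by ring

include hα1 hα2 in
lemma not_summable_kA (hn : 0 < n) : ¬ Summable (fun k : ℕ => (k:ℝ) * coefA α n k) := by
  intro h
  have h1 : Summable (fun k : ℕ => ((k:ℝ) + 1) * coefA α n (k + 1)) := by
    have := (summable_nat_add_iff 1).2 h
    simpa [Nat.cast_add] using this
  have hc : (0:ℝ) < (-α/2) * n := by
    have q1 : (0:ℝ) < -α/2 := by linarith
    have q2 : (0:ℝ) < (n:ℝ) := by exact_mod_cast hn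
    positivity
  have h2 : Summable (fun k : ℕ => (-α/2) * (n:ℝ) / ((n:ℝ) + 1 + k)) := by
    apply Summable.of_nonneg_of_le (fun k => by positivity)
      (fun k => coefA_lower hα1 hα2 n hn k) h1
  have h3 : Summable (fun k : ℕ => ((n:ℝ) + 1 + k)⁻¹) := by
    have := h2.mul_left (((-α/2) * (n:ℝ))⁻¹)
    refine this.congr fun k => ?_
    have hne : -α / 2 * (n:ℝ) ≠ 0 := hc.ne'
    have hDne : ((n:ℝ) + 1 + k) ≠ 0 := by positivity
    field_simp
    have hα0 : α ≠ 0 := by intro h0; simp [h0] at hne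
    have hnn : (n:ℝ) ≠ 0 := by intro h0; simp [h0] at hne
    rw [div_eq_one_iff_eq (by
      intro h0
      exact hα0 h0)]
  have h4 : Summable (fun k : ℕ => ((k:ℝ))⁻¹) := by
    rw [← summable_nat_add_iff (n+1)]
    refine h3.congr fun k => ?_
    push_cast
    ring_nf
  exact Real.not_summable_natCast_inv h4

/-! ### The power series `G` and its derivative -/

end withAlpha

noncomputable def Gf (α : ℝ) (n : ℕ) (x : ℝ) : ℝ := ∑' k : ℕ, coefA α n k * x ^ k

noncomputable def DGf (α : ℝ) (n : ℕ) (x : ℝ) : ℝ := ∑' k : ℕ, (k:ℝ) * coefA α n k * x ^ (k - 1)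

section withAlpha2

variable {α : ℝ} (hα1 : -1 < α) (hα2 : α < 0) (n : ℕ)

lemma summable_aux_geom {ρ : ℝ} (h0 : 0 ≤ ρ) (h1 : ρ < 1) :
    Summable (fun k : ℕ => (k:ℝ) * ρ ^ (k - 1)) := by
  rw [← summable_nat_add_iff 1]
  have hs : Summable (fun k : ℕ => ((k:ℝ) ^ 1) * ρ ^ k) :=
    summable_pow_mul_geometric_of_norm_lt_one 1 (by rwa [Real.norm_eq_abs, _root_.abs_of_nonneg h0])
  have := hs.add (summable_geometric_of_lt_one h0 h1)
  refine this.congr fun k => ?_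
  push_cast
  ring

include hα1 hα2 in
lemma summable_G {x : ℝ} (hx : |x| < 1) : Summable (fun k : ℕ => coefA α n k * x ^ k) := by
  apply Summable.of_norm_bounded (summable_geometric_of_lt_one (abs_nonneg x) hx)
  intro k
  rw [norm_mul, norm_pow, Real.norm_eq_abs, Real.norm_eq_abs,
    _root_.abs_of_pos (coefA_pos hα2 n k)]
  exact mul_le_of_le_one_left (by positivity) (coefA_le_one hα1 hα2 n k)

include hα1 hα2 in
lemma summable_DG {x : ℝ} (hx : |x| < 1) :
    Summable (fun k : ℕ => (k:ℝ) * coefA α n k * x ^ (k - 1)) := by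
  apply Summable.of_norm_bounded (summable_aux_geom (abs_nonneg x) hx)
  intro k
  rw [norm_mul, norm_mul, norm_pow, Real.norm_eq_abs, Real.norm_eq_abs, Real.norm_eq_abs,
    _root_.abs_of_pos (coefA_pos hα2 n k), Nat.abs_cast]
  calc (k:ℝ) * coefA α n k * |x| ^ (k-1)
      ≤ (k:ℝ) * 1 * |x| ^ (k-1) :=
        mul_le_mul_of_nonneg_right
          (mul_le_mul_of_nonneg_left (coefA_le_one hα1 hα2 n k) (Nat.cast_nonneg k))
          (by positivity)
    _ = (k:ℝ) * |x| ^ (k-1) := by rw [mul_one]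

include hα1 hα2 in
lemma hasDerivAt_Gf {x : ℝ} (hx : |x| < 1) : HasDerivAt (Gf α n) (DGf α n x) x := by
  have hρ0 : (0:ℝ) ≤ (|x| + 1) / 2 := by positivity
  have hρ1 : (|x| + 1) / 2 < 1 := by have := abs_nonneg x; linarith
  have hxρ : |x| < (|x| + 1) / 2 := by linarith
  apply hasDerivAt_of_tendstoUniformlyOn (s := Metric.ball (0:ℝ) ((|x| + 1) / 2))
    (l := Filter.atTop (α := ℕ)) Metric.isOpen_ball
    (f := fun N y => ∑ k ∈ Finset.range N, coefA α n k * y ^ k)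
    (f' := fun N y => ∑ k ∈ Finset.range N, (k:ℝ) * coefA α n k * y ^ (k - 1))
  · apply tendstoUniformlyOn_tsum_nat (summable_aux_geom hρ0 hρ1)
    intro k y hy
    rw [mem_ball_zero_iff, Real.norm_eq_abs] at hy
    rw [norm_mul, norm_mul, norm_pow, Real.norm_eq_abs, Real.norm_eq_abs, Real.norm_eq_abs,
      _root_.abs_of_pos (coefA_pos hα2 n k), Nat.abs_cast]
    calc (k:ℝ) * coefA α n k * |y| ^ (k-1)
        ≤ (k:ℝ) * 1 * ((|x| + 1) / 2) ^ (k-1) := by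
          apply mul_le_mul (mul_le_mul_of_nonneg_left (coefA_le_one hα1 hα2 n k)
            (Nat.cast_nonneg k)) (pow_le_pow_left₀ (abs_nonneg y) hy.le _)
            (by positivity) (by positivity)
      _ = (k:ℝ) * ((|x| + 1) / 2) ^ (k-1) := by rw [mul_one]
  · filter_upwards with N y _
    apply HasDerivAt.fun_sum
    intro k _
    have h := (hasDerivAt_pow k y).const_mul (coefA α n k)
    rw [show (k:ℝ) * coefA α n k * y ^ (k - 1) = coefA α n k * ((k:ℝ) * y ^ (k - 1)) by ring]
    exact h
  · intro y hy
    rw [mem_ball_zero_iff, Real.norm_eq_abs] at hy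
    exact (summable_G hα1 hα2 n (hy.trans hρ1)).hasSum.tendsto_sum_nat
  · rw [mem_ball_zero_iff, Real.norm_eq_abs]
    exact hxρ

include hα2 in
lemma Gf_nonneg {x : ℝ} (hx : 0 ≤ x) : 0 ≤ Gf α n x :=
  tsum_nonneg fun k => by have := coefA_pos hα2 n k; positivity

include hα2 in
lemma DGf_nonneg {x : ℝ} (hx : 0 ≤ x) : 0 ≤ DGf α n x :=
  tsum_nonneg fun k => by have := coefA_pos hα2 n k; positivity

include hα1 hα2 in
lemma exists_big (hn : 0 < n) (M : ℝ) :
    ∃ r : ℝ, r ∈ Set.Ico (0:ℝ) 1 ∧ M ≤ r ^ (n+1) * DGf α n (r^2) := by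
  have hnn : ∀ k : ℕ, 0 ≤ (k:ℝ) * coefA α n k :=
    fun k => by have := coefA_pos hα2 n k; positivity
  have hdiv : Filter.Tendsto (fun N => ∑ k ∈ Finset.range N, (k:ℝ) * coefA α n k)
      Filter.atTop Filter.atTop :=
    (not_summable_iff_tendsto_nat_atTop_of_nonneg hnn).1 (not_summable_kA hα1 hα2 n hn)
  obtain ⟨N, hN⟩ := (hdiv.eventually_ge_atTop (M + 1)).exists
  set φ : ℝ → ℝ :=
    fun r => r ^ (n+1) * ∑ k ∈ Finset.range N, (k:ℝ) * coefA α n k * (r^2) ^ (k-1) with hφ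
  have hφc : Continuous φ := by
    apply (continuous_pow (n+1)).mul
    apply continuous_finset_sum
    intro k _
    exact continuous_const.mul ((continuous_pow 2).pow (k-1))
  have hφ1 : M < φ 1 := by
    rw [hφ]
    simp only [one_pow, mul_one, one_mul]
    linarith
  have hev1 : ∀ᶠ r : ℝ in nhdsWithin (1:ℝ) (Set.Iio 1), M < φ r :=
    ((hφc.continuousAt (x := (1:ℝ))).eventually (eventually_gt_nhds hφ1)).filter_mono
      nhdsWithin_le_nhds
  have hev2 : ∀ᶠ r : ℝ in nhdsWithin (1:ℝ) (Set.Iio 1), r ∈ Set.Ico (0:ℝ) 1 := by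
    have h1 : ∀ᶠ r : ℝ in nhdsWithin (1:ℝ) (Set.Iio 1), r < 1 :=
      eventually_mem_nhdsWithin.mono fun x hx => hx
    have h2 : ∀ᶠ r : ℝ in nhdsWithin (1:ℝ) (Set.Iio 1), 0 < r :=
      (eventually_gt_nhds (by norm_num : (0:ℝ) < 1)).filter_mono nhdsWithin_le_nhds
    filter_upwards [h1, h2] with r hr1 hr0
    exact ⟨hr0.le, hr1⟩
  obtain ⟨r, hM, hrI⟩ := (hev1.and hev2).exists
  refine ⟨r, hrI, ?_⟩
  have hr2 : |r^2| < 1 := by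
    rw [_root_.abs_of_nonneg (by positivity)]
    nlinarith [hrI.1, hrI.2]
  calc M ≤ φ r := hM.le
    _ ≤ r^(n+1) * DGf α n (r^2) := by
        apply mul_le_mul_of_nonneg_left _ (pow_nonneg hrI.1 _)
        exact Summable.sum_le_tsum (Finset.range N)
          (fun k _ => by have := coefA_pos hα2 n k; positivity)
          (summable_DG hα1 hα2 n hr2)

end withAlpha2
end S15

namespace S15

section Main

variable {α : ℝ} (hα1 : -1 < α) (hα2 : α < 0) (n : ℕ)

include hα1 hα2 in
lemma exF_eq {z : ℂ} (hz : ‖z‖ < 1) :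
    exF α n z = ((Gf α n (‖z‖ ^ 2) : ℝ) : ℂ) * z ^ n := by
  have habs : (0:ℝ) ≤ ‖z‖ := norm_nonneg z
  unfold exF
  simp only [pow_mul]
  rw [tsum_mul_right, ← Complex.ofReal_tsum]
  rfl

lemma abs_polar {r : ℝ} (hr : 0 ≤ r) (θ : ℝ) : ‖polar r θ‖ = r := by
  rw [show polar r θ = (r:ℂ) * Complex.exp ((θ:ℂ) * Complex.I) from rfl, norm_mul, Complex.norm_real, Real.norm_eq_abs, Complex.norm_exp_ofReal_mul_I, mul_one,
    _root_.abs_of_nonneg hr]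

include hα1 hα2 in
lemma radial_norm {r : ℝ} (hr : r ∈ Set.Ico (0:ℝ) 1) (θ : ℝ) :
    ‖radialDeriv (exF α n) r θ‖ =
      DGf α n (r^2) * (2*r) * r^n + Gf α n (r^2) * ((n:ℝ) * r^(n-1)) := by
  obtain ⟨hr0, hr1⟩ := hr
  have hx2 : |r^2| < 1 := by
    rw [_root_.abs_of_nonneg (by positivity)]
    nlinarith
  have hsq : HasDerivAt (fun y : ℝ => y^2) (2*r) r := by simpa using hasDerivAt_pow 2 r
  have h2 : HasDerivAt (fun s : ℝ => Gf α n (s^2)) (DGf α n (r^2) * (2*r)) r :=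
    (hasDerivAt_Gf hα1 hα2 n hx2).comp_of_eq r hsq rfl
  have h3 : HasDerivAt (fun s : ℝ => ((Gf α n (s^2) : ℝ) : ℂ))
      ((DGf α n (r^2) * (2*r) : ℝ) : ℂ) r := HasDerivAt.ofReal_comp h2
  have h4 : HasDerivAt (fun s : ℝ => ((s : ℂ)) ^ n) ((n:ℂ) * (r:ℂ)^(n-1)) r :=
    (hasDerivAt_pow n ((r:ℝ):ℂ)).comp_ofReal
  have h5 := (h3.mul h4).mul_const ((Complex.exp ((θ:ℂ) * Complex.I)) ^ n)
  have hev : (fun s : ℝ => exF α n (polar s θ)) =ᶠ[nhds r]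
      (fun s : ℝ => ((Gf α n (s^2) : ℝ) : ℂ) * (s:ℂ)^n * (Complex.exp ((θ:ℂ) * Complex.I))^n) := by
    filter_upwards [isOpen_Ioo.mem_nhds (show r ∈ Set.Ioo (-1:ℝ) 1 from ⟨by linarith, hr1⟩)]
      with s hs
    have habs : ‖polar s θ‖ < 1 := by
      rw [show polar s θ = (s:ℂ) * Complex.exp ((θ:ℂ) * Complex.I) from rfl, norm_mul,
        Complex.norm_real, Real.norm_eq_abs, Complex.norm_exp_ofReal_mul_I, mul_one]
      exact abs_lt.2 ⟨hs.1, hs.2⟩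
    rw [exF_eq hα1 hα2 n habs]
    have h1 : ‖polar s θ‖ ^ 2 = s ^ 2 := by
      rw [show polar s θ = (s:ℂ) * Complex.exp ((θ:ℂ) * Complex.I) from rfl, norm_mul,
        Complex.norm_real, Real.norm_eq_abs, Complex.norm_exp_ofReal_mul_I, mul_one, _root_.sq_abs]
    rw [h1, show polar s θ = (s:ℂ) * Complex.exp ((θ:ℂ) * Complex.I) from rfl, mul_pow, mul_assoc]
  have h6 := (h5.congr_of_eventuallyEq hev).deriv
  rw [show radialDeriv (exF α n) r θ = deriv (fun s : ℝ => exF α n (polar s θ)) r from rfl, h6]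
  rw [norm_mul, norm_pow, Complex.norm_exp_ofReal_mul_I, one_pow, mul_one]
  rw [show ((DGf α n (r^2) * (2*r) : ℝ) : ℂ) * (r:ℂ)^n
        + ((Gf α n (r^2) : ℝ) : ℂ) * ((n:ℂ) * (r:ℂ)^(n-1))
      = ((DGf α n (r^2) * (2*r) * r^n + Gf α n (r^2) * ((n:ℝ) * r^(n-1)) : ℝ) : ℂ) from by
    push_cast; ring]
  rw [Complex.norm_real, Real.norm_eq_abs, _root_.abs_of_nonneg]
  have hDG := DGf_nonneg hα2 n (show (0:ℝ) ≤ r^2 by positivity)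
  have hG := Gf_nonneg hα2 n (show (0:ℝ) ≤ r^2 by positivity)
  have hp1 : (0:ℝ) ≤ r ^ n := by positivity
  have hp2 : (0:ℝ) ≤ r ^ (n-1) := by positivity
  have hn0 : (0:ℝ) ≤ (n:ℝ) := Nat.cast_nonneg n
  apply add_nonneg
  · apply mul_nonneg (mul_nonneg hDG (by linarith)) hp1
  · exact mul_nonneg hG (mul_nonneg hn0 hp2)

include hα1 hα2 in
lemma pderiv_eqs (hn : 0 < n) {z : ℂ} (hz : ‖z‖ < 1) :
    pderivZ (exF α n) z =
      ((DGf α n (‖z‖^2) * (‖z‖^2)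
          + (n:ℝ) * Gf α n (‖z‖^2) : ℝ) : ℂ) * z^(n-1) ∧
    pderivZbar (exF α n) z =
      ((DGf α n (‖z‖^2) : ℝ) : ℂ) * z^(n-1) * z^2 := by
  have hx2 : |‖z‖ ^ 2| < 1 := by
    have h0 := norm_nonneg z
    rw [_root_.abs_of_nonneg (by positivity)]
    nlinarith
  have hre : HasFDerivAt (fun w : ℂ => w.re) Complex.reCLM z := Complex.reCLM.hasFDerivAt
  have him : HasFDerivAt (fun w : ℂ => w.im) Complex.imCLM z := Complex.imCLM.hasFDerivAt
  have hQ := (hre.mul hre).add (him.mul him)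
  have hQz : z.re * z.re + z.im * z.im = ‖z‖ ^ 2 := by
    rw [Complex.sq_norm, Complex.normSq_apply]
  have hG : HasDerivAt (Gf α n) (DGf α n (‖z‖^2)) (z.re*z.re + z.im*z.im) := by
    rw [hQz]; exact hasDerivAt_Gf hα1 hα2 n hx2
  have hcomp := hG.comp_hasFDerivAt z hQ
  have h2 := Complex.ofRealCLM.hasFDerivAt.comp z hcomp
  have h3 := ((hasDerivAt_pow n z).hasFDerivAt).restrictScalars ℝ
  have h4 := h2.mul h3
  have h5 := h4.congr_of_eventuallyEq (f₁ := exF α n) (by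
    filter_upwards [Metric.isOpen_ball.mem_nhds (show z ∈ Metric.ball (0:ℂ) 1 from by
      simpa [Metric.mem_ball, Complex.dist_eq] using hz)] with w hw
    have hw1 : ‖w‖ < 1 := by simpa [Metric.mem_ball, Complex.dist_eq] using hw
    have hQw : w.re * w.re + w.im * w.im = ‖w‖ ^ 2 := by
      rw [Complex.sq_norm, Complex.normSq_apply]
    rw [exF_eq hα1 hα2 n hw1]
    simp only [Pi.mul_apply, Pi.add_apply, Function.comp_apply, Complex.ofRealCLM_apply, hQw])
  have hfd := h5.fderiv
  have hzn : z ^ n = z^(n-1) * z := by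
    conv_lhs => rw [show n = (n-1)+1 from (Nat.succ_pred_eq_of_pos hn).symm]
    rw [pow_succ]
  have hx2c : ((‖z‖ : ℝ) : ℂ)^2 = (z.re:ℂ) * z.re + (z.im:ℂ) * z.im := by
    rw [← Complex.ofReal_pow, ← hQz]
    push_cast
    ring
  constructor
  · rw [show pderivZ (exF α n) z
        = (fderiv ℝ (exF α n) z 1 - Complex.I * fderiv ℝ (exF α n) z Complex.I) / 2 from rfl,
      hfd, div_eq_iff (two_ne_zero (α := ℂ))]
    simp only [ContinuousLinearMap.add_apply, ContinuousLinearMap.coe_smul', Pi.smul_apply,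
      ContinuousLinearMap.smulRight_apply, ContinuousLinearMap.one_apply,
      ContinuousLinearMap.coe_restrictScalars', ContinuousLinearMap.coe_comp',
      Function.comp_apply, Complex.ofRealCLM_apply, Complex.reCLM_apply, Complex.imCLM_apply,
      Pi.mul_apply, Pi.add_apply, ContinuousLinearMap.toSpanSingleton_apply,
      Complex.one_re, Complex.one_im, Complex.I_re, Complex.I_im, smul_eq_mul]
    push_cast
    rw [hzn, hx2c]
    simp only [Complex.ext_iff, Complex.mul_re, Complex.mul_im, Complex.add_re, Complex.add_im,
      Complex.sub_re, Complex.sub_im, Complex.I_re, Complex.I_im, Complex.ofReal_re,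
      Complex.ofReal_im, Complex.natCast_re, Complex.natCast_im, Complex.re_ofNat,
      Complex.im_ofNat, mul_zero, zero_mul, mul_one, one_mul, sub_zero, zero_sub, add_zero,
      zero_add, neg_zero, neg_neg]
    have hA : z.re^2 + z.im^2 = ‖z‖ ^ 2 := by rw [← hQz]; ring
    simp only [← hA]
    constructor <;> ring
  · rw [show pderivZbar (exF α n) z
        = (fderiv ℝ (exF α n) z 1 + Complex.I * fderiv ℝ (exF α n) z Complex.I) / 2 from rfl,
      hfd, div_eq_iff (two_ne_zero (α := ℂ))]
    simp only [ContinuousLinearMap.add_apply, ContinuousLinearMap.coe_smul', Pi.smul_apply,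
      ContinuousLinearMap.smulRight_apply, ContinuousLinearMap.one_apply,
      ContinuousLinearMap.coe_restrictScalars', ContinuousLinearMap.coe_comp',
      Function.comp_apply, Complex.ofRealCLM_apply, Complex.reCLM_apply, Complex.imCLM_apply,
      Pi.mul_apply, Pi.add_apply, ContinuousLinearMap.toSpanSingleton_apply,
      Complex.one_re, Complex.one_im, Complex.I_re, Complex.I_im, smul_eq_mul]
    push_cast
    rw [hzn, pow_two z]
    simp only [Complex.ext_iff, Complex.mul_re, Complex.mul_im, Complex.add_re, Complex.add_im,
      Complex.sub_re, Complex.sub_im, Complex.I_re, Complex.I_im, Complex.ofReal_re,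
      Complex.ofReal_im, Complex.natCast_re, Complex.natCast_im, Complex.re_ofNat,
      Complex.im_ofNat, mul_zero, zero_mul, mul_one, one_mul, sub_zero, zero_sub, add_zero,
      zero_add, neg_zero, neg_neg]
    have hA : z.re^2 + z.im^2 = ‖z‖ ^ 2 := by rw [← hQz]; ring
    simp only [← hA]
    constructor <;> ring

end Main

/-! ### `circMean` of a function with constant modulus, and the Hardy norm -/

open scoped ENNReal

lemma circMean_const {p : ℝ≥0∞} (hp : p ≠ 0) {h : ℝ → ℂ} {c : ℝ} (hc : ∀ θ, ‖h θ‖ = c) :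
    circMean p h = ENNReal.ofReal c := by
  have hc0 : 0 ≤ c := (hc 0) ▸ norm_nonneg _
  have hπ : (0:ℝ) < 2 * Real.pi := by positivity
  unfold circMean
  split_ifs with hP
  · have h1 : ∀ θ : ℝ, ((‖h θ‖₊ : ℝ≥0∞)) = ENNReal.ofReal c := fun θ => by
      rw [← enorm_eq_nnnorm, ← ofReal_norm_eq_enorm, hc]
    simp only [h1, iSup_const]
  · have hpt : 0 < p.toReal := ENNReal.toReal_pos hp hP
    have h1 : ∀ θ : ℝ, ((‖h θ‖₊ : ℝ≥0∞)) ^ p.toReal = ENNReal.ofReal c ^ p.toReal := fun θ => by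
      rw [← enorm_eq_nnnorm, ← ofReal_norm_eq_enorm, hc]
    simp only [h1]
    rw [setLIntegral_const, Real.volume_Ioc, show (2 * Real.pi - 0) = 2 * Real.pi by ring,
      mul_div_assoc, ENNReal.div_self (ENNReal.ofReal_pos.2 hπ).ne' ENNReal.ofReal_ne_top,
      mul_one, ← ENNReal.rpow_mul, mul_one_div, div_self hpt.ne', ENNReal.rpow_one]

section Final

variable {α : ℝ} (hα1 : -1 < α) (hα2 : α < 0) (n : ℕ)

include hα1 hα2 in
lemma pz_norm (hn : 0 < n) {r : ℝ} (hr : r ∈ Set.Ico (0:ℝ) 1) (θ : ℝ) :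
    ‖pderivZ (exF α n) (polar r θ)‖
      = (DGf α n (r^2) * r^2 + (n:ℝ) * Gf α n (r^2)) * r^(n-1) := by
  have hDG := DGf_nonneg hα2 n (show (0:ℝ) ≤ r^2 by positivity)
  have hG := Gf_nonneg hα2 n (show (0:ℝ) ≤ r^2 by positivity)
  have habs : ‖polar r θ‖ = r := abs_polar hr.1 θ
  have hlt : ‖polar r θ‖ < 1 := by rw [habs]; exact hr.2
  rw [(pderiv_eqs hα1 hα2 n hn hlt).1, habs, norm_mul, Complex.norm_real, norm_pow,
    habs, Real.norm_eq_abs, _root_.abs_of_nonneg]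
  apply add_nonneg (mul_nonneg hDG (by positivity)) (mul_nonneg (Nat.cast_nonneg n) hG)

include hα1 hα2 in
lemma pzbar_norm (hn : 0 < n) {r : ℝ} (hr : r ∈ Set.Ico (0:ℝ) 1) (θ : ℝ) :
    ‖pderivZbar (exF α n) (polar r θ)‖ = DGf α n (r^2) * r^(n-1) * r^2 := by
  have hDG := DGf_nonneg hα2 n (show (0:ℝ) ≤ r^2 by positivity)
  have habs : ‖polar r θ‖ = r := abs_polar hr.1 θ
  have hlt : ‖polar r θ‖ < 1 := by rw [habs]; exact hr.2
  rw [(pderiv_eqs hα1 hα2 n hn hlt).2, habs, norm_mul, norm_mul, Complex.norm_real, norm_pow,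
    norm_pow, habs, Real.norm_eq_abs, _root_.abs_of_nonneg hDG]

include hα1 hα2 in
lemma hardy_top {p : ℝ≥0∞} (hp : p ≠ 0) (hn : 0 < n) {g : ℝ → ℝ → ℂ}
    (H : ∀ r, r ∈ Set.Ico (0:ℝ) 1 → ∃ cv : ℝ,
      (∀ θ, ‖g r θ‖ = cv) ∧ r^(n+1) * DGf α n (r^2) ≤ cv) :
    hardyNorm p g = ∞ := by
  unfold hardyNorm
  rw [iSup_eq_top]
  intro b hb
  obtain ⟨r, hrI, hrM⟩ := exists_big hα1 hα2 n hn (b.toReal + 1)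
  obtain ⟨cv, hcv, hcv2⟩ := H r hrI
  refine ⟨r, ?_⟩
  rw [iSup_pos hrI, circMean_const hp hcv]
  have h1 : b < ENNReal.ofReal (b.toReal + 1) := by
    conv_lhs => rw [← ENNReal.ofReal_toReal hb.ne]
    exact (ENNReal.ofReal_lt_ofReal_iff (by positivity)).2 (lt_add_one _)
  exact lt_of_lt_of_le h1 (ENNReal.ofReal_le_ofReal (hrM.trans hcv2))

end Final

end S15

/-- For `α ∈ (-1,0)`, `n ≥ 1`, and `f(z) = Σ_k a_{n,k}|z|^{2k} z^n`, the
Hardy type norms of `∂_r f`, `∂_z f`, `∂_{z̄} f` are infinite for all `p ∈ (0,∞]`. -/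
theorem stmt15 (α : ℝ) (hα1 : -1 < α) (hα2 : α < 0) (n : ℕ) (hn : 0 < n)
    (p : ℝ≥0∞) (hp : 0 < p) :
    hardyNorm p (radialDeriv (exF α n)) = ∞ ∧
    hardyNorm p (fun r θ => pderivZ (exF α n) (polar r θ)) = ∞ ∧
    hardyNorm p (fun r θ => pderivZbar (exF α n) (polar r θ)) = ∞ := by
  have hp0 : p ≠ 0 := hp.ne'
  refine ⟨?_, ?_, ?_⟩
  · apply S15.hardy_top hα1 hα2 n hp0 hn
    intro r hr
    have hDG := S15.DGf_nonneg hα2 n (show (0:ℝ) ≤ r^2 by positivity)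
    have hG := S15.Gf_nonneg hα2 n (show (0:ℝ) ≤ r^2 by positivity)
    have hrn : (0:ℝ) ≤ r^n := pow_nonneg hr.1 n
    have hrn1 : (0:ℝ) ≤ r^(n-1) := pow_nonneg hr.1 _
    have hn0 : (0:ℝ) ≤ (n:ℝ) := Nat.cast_nonneg n
    refine ⟨S15.DGf α n (r^2) * (2*r) * r^n + S15.Gf α n (r^2) * ((n:ℝ) * r^(n-1)),
      fun θ => S15.radial_norm hα1 hα2 n hr θ, ?_⟩
    have h1 : r^(n+1) = r * r^n := by rw [pow_succ]; ring
    rw [h1]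
    nlinarith [mul_nonneg hG (mul_nonneg hn0 hrn1),
      mul_nonneg (mul_nonneg hDG hr.1) hrn]
  · apply S15.hardy_top hα1 hα2 n hp0 hn
    intro r hr
    have hDG := S15.DGf_nonneg hα2 n (show (0:ℝ) ≤ r^2 by positivity)
    have hG := S15.Gf_nonneg hα2 n (show (0:ℝ) ≤ r^2 by positivity)
    have hrn1 : (0:ℝ) ≤ r^(n-1) := pow_nonneg hr.1 _
    have hn0 : (0:ℝ) ≤ (n:ℝ) := Nat.cast_nonneg n
    refine ⟨(S15.DGf α n (r^2) * r^2 + (n:ℝ) * S15.Gf α n (r^2)) * r^(n-1),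
      fun θ => S15.pz_norm hα1 hα2 n hn hr θ, ?_⟩
    have h2 : r^(n-1) * r^2 = r^(n+1) := by rw [← pow_add]; congr 1; omega
    rw [show r^(n+1) * S15.DGf α n (r^2) = S15.DGf α n (r^2) * r^2 * r^(n-1) from by
      rw [← h2]; ring]
    apply mul_le_mul_of_nonneg_right _ hrn1
    nlinarith [mul_nonneg hn0 hG]
  · apply S15.hardy_top hα1 hα2 n hp0 hn
    intro r hr
    refine ⟨S15.DGf α n (r^2) * r^(n-1) * r^2,
      fun θ => S15.pzbar_norm hα1 hα2 n hn hr θ, le_of_eq ?_⟩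
    have h2 : r^(n-1) * r^2 = r^(n+1) := by rw [← pow_add]; congr 1; omega
    rw [← h2]
    ring

end
end
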